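/- Let a > 0, λ > 0, W > 0, r ∈ ℕ, and let c_1, …, c_r be real numbers with 0 < c_t ≤ λW for every t ∈ [r] and Σ_{t=1}^{r} c_t > W. Suppose x_1, …, x_r ≥ 0 satisfy (aλW / c_t)·x_t + a·Σ_{i=1}^{t−1} x_i ≥ 1 for every t ∈ [r]. Then Σ_{t=1}^{r} x_t ≥ (1/a)·(1 − e^{−1/λ}). -/

import Mathlib

/-
STATEMENT 10: combining the greedy linear-program bound with 1 − x ≤ e^{−x}
and Σ_t c_t/(λW) > 1/λ (equations (10)–(11) of the proof of Theorem 1).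
Indices run over [r] = {1, …, r}; empty sums are 0.
-/

theorem greedy_lp_exp_lower_bound
    (a lam W : ℝ) (ha : 0 < a) (hlam : 0 < lam) (hW : 0 < W)
    (r : ℕ) (c x : ℕ → ℝ)
    (hc : ∀ t ∈ Finset.Icc 1 r, 0 < c t ∧ c t ≤ lam * W)
    (hcW : ∑ t ∈ Finset.Icc 1 r, c t > W)
    (hx0 : ∀ t ∈ Finset.Icc 1 r, 0 ≤ x t)
    (hx : ∀ t ∈ Finset.Icc 1 r,
      (a * lam * W / c t) * x t + a * ∑ i ∈ Finset.Ico 1 t, x i ≥ 1) :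
    ∑ t ∈ Finset.Icc 1 r, x t ≥ (1 / a) * (1 - Real.exp (-1 / lam)) := by
  have hlW : 0 < lam * W := mul_pos hlam hW
  -- main induction: 1 - ∏ (1 - c_t/(λW)) ≤ a * ∑ x_t
  have key : ∀ n : ℕ, n ≤ r →
      1 - ∏ t ∈ Finset.Icc 1 n, (1 - c t / (lam * W)) ≤
        a * ∑ t ∈ Finset.Icc 1 n, x t := by
    intro n hn
    induction n with
    | zero => simp
    | succ m ih =>
      have hm : m ≤ r := le_of_lt (Nat.lt_of_succ_le hn)
      have ihm := ih hm
      have hmem : m + 1 ∈ Finset.Icc 1 r := by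
        simp [Nat.succ_le_iff]; omega
      obtain ⟨hc0, hc1⟩ := hc _ hmem
      have hq0 : 0 < c (m+1) / (lam * W) := div_pos hc0 hlW
      have hq1 : c (m+1) / (lam * W) ≤ 1 := (div_le_one hlW).mpr hc1
      have hIcc : Finset.Icc 1 (m+1) = insert (m+1) (Finset.Icc 1 m) := by
        ext y; simp; omega
      have hnot : m + 1 ∉ Finset.Icc 1 m := by simp
      rw [hIcc, Finset.prod_insert hnot, Finset.sum_insert hnot]
      -- constraint at t = m+1
      have hcon := hx _ hmem
      rw [Finset.Ico_add_one_right_eq_Icc] at hcon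
      set S := ∑ t ∈ Finset.Icc 1 m, x t with hS
      set P := ∏ t ∈ Finset.Icc 1 m, (1 - c t / (lam * W)) with hP
      set q := c (m+1) / (lam * W) with hqdef
      -- a * x (m+1) ≥ q * (1 - a * S)
      have hax : q * (1 - a * S) ≤ a * x (m+1) := by
        rcases le_or_gt (1 - a * S) 0 with h | h
        · have : 0 ≤ a * x (m+1) :=
            mul_nonneg ha.le (hx0 _ hmem)
          nlinarith
        · have h2 : (a * lam * W / c (m+1)) * x (m+1) ≥ 1 - a * S := by linarith
          have : a * lam * W / c (m+1) = a / q := by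
            field_simp [hqdef]
            rw [hqdef]; field_simp [hlam.ne', hW.ne']
          rw [this] at h2
          have hq0' : 0 < q := hq0
          calc q * (1 - a * S) ≤ q * (a / q * x (m+1)) := by
                apply mul_le_mul_of_nonneg_left h2 hq0'.le
            _ = a * x (m+1) := by field_simp
      -- 1 - a*S ≤ P
      have hPS : 1 - a * S ≤ P := by linarith
      have h1q : 0 ≤ 1 - q := by linarith
      nlinarith [mul_le_mul_of_nonneg_left hPS h1q]
  have hmain := key r le_rfl
  -- product ≤ exp(-∑ c/(λW)) ≤ exp(-1/λ)
  have hprod : ∏ t ∈ Finset.Icc 1 r, (1 - c t / (lam * W)) ≤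
      Real.exp (-1 / lam) := by
    have h1 : ∏ t ∈ Finset.Icc 1 r, (1 - c t / (lam * W)) ≤
        ∏ t ∈ Finset.Icc 1 r, Real.exp (-(c t / (lam * W))) := by
      apply Finset.prod_le_prod
      · intro t ht
        obtain ⟨_, hc1⟩ := hc t ht
        have := (div_le_one hlW).mpr hc1
        linarith
      · intro t ht
        have := Real.add_one_le_exp (-(c t / (lam * W)))
        linarith
    have h2 : ∏ t ∈ Finset.Icc 1 r, Real.exp (-(c t / (lam * W))) =
        Real.exp (-(∑ t ∈ Finset.Icc 1 r, c t / (lam * W))) := by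
      rw [← Real.exp_sum]
      congr 1
      rw [Finset.sum_neg_distrib]
    have h3 : -(∑ t ∈ Finset.Icc 1 r, c t / (lam * W)) ≤ -1 / lam := by
      rw [← Finset.sum_div]
      have hsum : (1:ℝ) / lam < (∑ t ∈ Finset.Icc 1 r, c t) / (lam * W) := by
        rw [div_lt_div_iff₀ hlam hlW]
        nlinarith
      have : -1 / lam = -(1 / lam) := by ring
      rw [this]
      linarith
    calc ∏ t ∈ Finset.Icc 1 r, (1 - c t / (lam * W)) ≤ _ := h1
      _ = _ := h2
      _ ≤ Real.exp (-1 / lam) := Real.exp_le_exp.mpr h3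
  rw [ge_iff_le, div_mul_eq_mul_div, div_le_iff₀ ha, mul_comm]
  nlinarith [hmain, hprod]
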